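/- Let (U, S, Z, X, Y) be finite discrete random variables with joint pmf p(s) p(u) p(x | u, s) p(y | x, x_r(u, z(x,s)), s), where Z = z(X, S) and X_r = x_r(U, Z) are deterministic functions. Suppose M is uniform on [1:2^{nR}], independent of the i.i.d. state sequence S^n, with Z_i = z(X_i, S_i), X_{r,i} a function of Z^i, X_i a function of (M, S^n), Y_i conditionally independent of the past given (X_i, X_{r,i}, S_i), and H(M|Y^n, S^n) <= n*eps_n. Then with U_i = (Z^{i-1}, S^{i-1}), nR <= sum_{i=1}^n H(Z_i | U_i, S_i) + sum_{i=1}^n I(X_i; Y_i | U_i, Z_i, S_i) + n*eps_n. -/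

import Mathlib

open scoped BigOperators Classical
open Filter

noncomputable section

/-- Probability that the random variable `f` equals `a` under the pmf `p`. -/
def prob {Ω α : Type*} [Fintype Ω] (p : Ω → ℝ) (f : Ω → α) (a : α) : ℝ :=
  ∑ ω, if f ω = a then p ω else 0

/-- `p` is a probability mass function. -/
def IsPMF {Ω : Type*} [Fintype Ω] (p : Ω → ℝ) : Prop :=
  (∀ ω, 0 ≤ p ω) ∧ ∑ ω, p ω = 1

/-- Shannon entropy (base 2). -/
def Hent {Ω α : Type*} [Fintype Ω] [Fintype α] (p : Ω → ℝ) (f : Ω → α) : ℝ :=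
  - ∑ a, prob p f a * Real.logb 2 (prob p f a)

/-- Conditional entropy H(f | g). -/
def Hcond {Ω α β : Type*} [Fintype Ω] [Fintype α] [Fintype β]
    (p : Ω → ℝ) (f : Ω → α) (g : Ω → β) : ℝ :=
  Hent p (fun ω => (f ω, g ω)) - Hent p g

/-- Mutual information I(f; g). -/
def Imut {Ω α β : Type*} [Fintype Ω] [Fintype α] [Fintype β]
    (p : Ω → ℝ) (f : Ω → α) (g : Ω → β) : ℝ :=
  Hent p f + Hent p g - Hent p (fun ω => (f ω, g ω))

/-- Conditional mutual information I(f; g | h). -/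
def Icond {Ω α β γ : Type*} [Fintype Ω] [Fintype α] [Fintype β] [Fintype γ]
    (p : Ω → ℝ) (f : Ω → α) (g : Ω → β) (h : Ω → γ) : ℝ :=
  Hcond p f h + Hcond p g h - Hcond p (fun ω => (f ω, g ω)) h

/-- Conditional independence of `f` and `g` given `h` under pmf `p`. -/
def CondIndepFun {Ω α β γ : Type*} [Fintype Ω]
    (p : Ω → ℝ) (f : Ω → α) (g : Ω → β) (h : Ω → γ) : Prop :=
  ∀ a b c, prob p (fun ω => (f ω, g ω, h ω)) (a, b, c) * prob p h c
    = prob p (fun ω => (f ω, h ω)) (a, c) * prob p (fun ω => (g ω, h ω)) (b, c)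


section Lib
set_option linter.unusedSectionVars false
variable {Ω α β γ : Type*} [Fintype Ω] {p : Ω → ℝ}

lemma prob_nonneg (hp : ∀ ω, 0 ≤ p ω) (f : Ω → α) (a : α) : 0 ≤ prob p f a :=
  Finset.sum_nonneg fun ω _ => by by_cases h : f ω = a <;> simp [h, hp ω]

lemma prob_congr {f g : Ω → α} (h : ∀ ω, f ω = g ω) (a : α) : prob p f a = prob p g a := by
  have : f = g := funext h
  rw [this]

lemma prob_sum [Fintype α] (hp : IsPMF p) (f : Ω → α) : ∑ a, prob p f a = 1 := by
  rw [← hp.2]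
  unfold prob
  rw [Finset.sum_comm]
  refine Finset.sum_congr rfl fun ω _ => ?_
  simp

lemma prob_comp_inj {f : Ω → α} (e : α → β) (he : Function.Injective e) (a : α) :
    prob p (fun ω => e (f ω)) (e a) = prob p f a := by
  unfold prob
  refine Finset.sum_congr rfl fun ω _ => ?_
  simp [he.eq_iff]

lemma prob_comp_notrange {f : Ω → α} (e : α → β) {b : β} (hb : ∀ a, e a ≠ b) :
    prob p (fun ω => e (f ω)) b = 0 := by
  unfold prob
  refine Finset.sum_eq_zero fun ω _ => ?_
  simp [hb (f ω)]

lemma hent_congr [Fintype α] {f g : Ω → α} (h : ∀ ω, f ω = g ω) : Hent p f = Hent p g := by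
  have : f = g := funext h
  rw [this]

lemma hcond_congr [Fintype α] [Fintype β] {f : Ω → α} {g h : Ω → β} (hh : ∀ ω, g ω = h ω) :
    Hcond p f g = Hcond p f h := by
  have : g = h := funext hh
  rw [this]

lemma hent_comp_inj [Fintype α] [Fintype β] {f : Ω → α} (e : α → β)
    (he : Function.Injective e) : Hent p (fun ω => e (f ω)) = Hent p f := by
  unfold Hent
  congr 1
  rw [← Finset.sum_subset (Finset.subset_univ ((Finset.univ : Finset α).image e))]
  · rw [Finset.sum_image (fun x _ y _ h => he h)]
    refine Finset.sum_congr rfl fun a _ => ?_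
    rw [prob_comp_inj e he]
  · intro b _ hb
    have : ∀ a, e a ≠ b := by
      intro a hab
      exact hb (Finset.mem_image.2 ⟨a, Finset.mem_univ a, hab⟩)
    rw [prob_comp_notrange e this]
    simp

lemma hent_of_mutual [Fintype α] [Fintype β] {f : Ω → α} {g : Ω → β}
    (φ : α → β) (ψ : β → α) (h1 : ∀ ω, g ω = φ (f ω)) (h2 : ∀ ω, f ω = ψ (g ω)) :
    Hent p f = Hent p g := by
  have e1 : Function.Injective (fun a : α => (a, φ a)) := fun x y h => (Prod.mk.injEq _ _ _ _ ▸ h).1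
  have e2 : Function.Injective (fun b : β => (ψ b, b)) := fun x y h => by
    simpa using (Prod.mk.injEq _ _ _ _ ▸ h).2
  calc Hent p f = Hent p (fun ω => ((f ω, φ (f ω)) : α × β)) := (hent_comp_inj _ e1).symm
    _ = Hent p (fun ω => ((ψ (g ω), g ω) : α × β)) :=
        hent_congr fun ω => by rw [← h1, ← h2]
    _ = Hent p g := hent_comp_inj _ e2


variable [Fintype α] [Fintype β] [Fintype γ]

lemma prob_snd (f : Ω → α) (g : Ω → β) (b : β) :
    prob p g b = ∑ a, prob p (fun ω => (f ω, g ω)) (a, b) := by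
  unfold prob
  rw [Finset.sum_comm]
  refine Finset.sum_congr rfl fun ω _ => ?_
  simp only [Prod.mk.injEq]
  by_cases h1 : g ω = b <;> simp [h1]

lemma prob_m1 (f : Ω → α) (g : Ω → β) (h : Ω → γ) (a : α) (c : γ) :
    prob p (fun ω => (f ω, h ω)) (a, c)
      = ∑ b, prob p (fun ω => (f ω, g ω, h ω)) (a, b, c) := by
  unfold prob
  rw [Finset.sum_comm]
  refine Finset.sum_congr rfl fun ω _ => ?_
  simp only [Prod.mk.injEq]
  by_cases h1 : f ω = a <;> by_cases h2 : h ω = c <;> simp [h1, h2]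

lemma prob_m2 (f : Ω → α) (g : Ω → β) (h : Ω → γ) (b : β) (c : γ) :
    prob p (fun ω => (g ω, h ω)) (b, c)
      = ∑ a, prob p (fun ω => (f ω, g ω, h ω)) (a, b, c) := by
  unfold prob
  rw [Finset.sum_comm]
  refine Finset.sum_congr rfl fun ω _ => ?_
  simp only [Prod.mk.injEq]
  by_cases h1 : g ω = b <;> by_cases h2 : h ω = c <;> simp [h1, h2]

lemma hent_triple (f : Ω → α) (g : Ω → β) (h : Ω → γ) :
    Hent p (fun ω => (f ω, g ω, h ω))
      = -∑ a, ∑ b, ∑ c, prob p (fun ω => (f ω, g ω, h ω)) (a, b, c)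
          * Real.logb 2 (prob p (fun ω => (f ω, g ω, h ω)) (a, b, c)) := by
  unfold Hent
  congr 1
  rw [Fintype.sum_prod_type]
  exact Finset.sum_congr rfl fun a _ => Fintype.sum_prod_type _

lemma hent_pair13 (f : Ω → α) (g : Ω → β) (h : Ω → γ) :
    Hent p (fun ω => (f ω, h ω))
      = -∑ a, ∑ b, ∑ c, prob p (fun ω => (f ω, g ω, h ω)) (a, b, c)
          * Real.logb 2 (prob p (fun ω => (f ω, h ω)) (a, c)) := by
  unfold Hent
  congr 1
  rw [Fintype.sum_prod_type]
  refine Finset.sum_congr rfl fun a _ => ?_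
  rw [Finset.sum_comm]
  refine Finset.sum_congr rfl fun c _ => ?_
  rw [prob_m1 f g h a c, Finset.sum_mul]

lemma hent_pair23 (f : Ω → α) (g : Ω → β) (h : Ω → γ) :
    Hent p (fun ω => (g ω, h ω))
      = -∑ a, ∑ b, ∑ c, prob p (fun ω => (f ω, g ω, h ω)) (a, b, c)
          * Real.logb 2 (prob p (fun ω => (g ω, h ω)) (b, c)) := by
  unfold Hent
  congr 1
  rw [Fintype.sum_prod_type]
  calc ∑ b, ∑ c, prob p (fun ω => (g ω, h ω)) (b, c)
          * Real.logb 2 (prob p (fun ω => (g ω, h ω)) (b, c))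
      = ∑ b, ∑ c, ∑ a, prob p (fun ω => (f ω, g ω, h ω)) (a, b, c)
          * Real.logb 2 (prob p (fun ω => (g ω, h ω)) (b, c)) := by
        refine Finset.sum_congr rfl fun b _ => Finset.sum_congr rfl fun c _ => ?_
        set L := Real.logb 2 (prob p (fun ω => (g ω, h ω)) (b, c)) with hL
        rw [prob_m2 f g h b c, Finset.sum_mul]
    _ = ∑ b, ∑ a, ∑ c, prob p (fun ω => (f ω, g ω, h ω)) (a, b, c)
          * Real.logb 2 (prob p (fun ω => (g ω, h ω)) (b, c)) := by
        exact Finset.sum_congr rfl fun b _ => Finset.sum_comm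
    _ = ∑ a, ∑ b, ∑ c, prob p (fun ω => (f ω, g ω, h ω)) (a, b, c)
          * Real.logb 2 (prob p (fun ω => (g ω, h ω)) (b, c)) := Finset.sum_comm

lemma prob_assoc (f : Ω → α) (g : Ω → β) (h : Ω → γ) (a : α) (b : β) (c : γ) :
    prob p (fun ω => ((f ω, g ω), h ω)) ((a, b), c)
      = prob p (fun ω => (f ω, g ω, h ω)) (a, b, c) := by
  unfold prob
  refine Finset.sum_congr rfl fun ω _ => ?_
  simp only [Prod.mk.injEq, and_assoc]

lemma prob_third_sum (f : Ω → α) (g : Ω → β) (h : Ω → γ) (c : γ) :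
    ∑ a, ∑ b, prob p (fun ω => (f ω, g ω, h ω)) (a, b, c) = prob p h c := by
  rw [prob_snd (fun ω => (f ω, g ω)) h c, Fintype.sum_prod_type]
  exact Finset.sum_congr rfl fun a _ => Finset.sum_congr rfl fun b _ => (prob_assoc f g h a b c).symm

lemma hent_third (f : Ω → α) (g : Ω → β) (h : Ω → γ) :
    Hent p h
      = -∑ a, ∑ b, ∑ c, prob p (fun ω => (f ω, g ω, h ω)) (a, b, c)
          * Real.logb 2 (prob p h c) := by
  unfold Hent
  congr 1
  calc ∑ c, prob p h c * Real.logb 2 (prob p h c)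
      = ∑ c, ∑ a, ∑ b, prob p (fun ω => (f ω, g ω, h ω)) (a, b, c)
          * Real.logb 2 (prob p h c) := by
        refine Finset.sum_congr rfl fun c _ => ?_
        set L := Real.logb 2 (prob p h c) with hL
        rw [← prob_third_sum f g h c, Finset.sum_mul]
        exact Finset.sum_congr rfl fun a _ => Finset.sum_mul _ _ _
    _ = ∑ a, ∑ c, ∑ b, prob p (fun ω => (f ω, g ω, h ω)) (a, b, c)
          * Real.logb 2 (prob p h c) := Finset.sum_comm
    _ = ∑ a, ∑ b, ∑ c, prob p (fun ω => (f ω, g ω, h ω)) (a, b, c)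
          * Real.logb 2 (prob p h c) :=
        Finset.sum_congr rfl fun a _ => Finset.sum_comm


lemma logb_key {r u v t : ℝ} (hr : 0 < r) (hru : r ≤ u) (hrv : r ≤ v) (hut : u ≤ t)
    (hci : r * t = u * v) :
    r * Real.logb 2 r + r * Real.logb 2 t = r * Real.logb 2 u + r * Real.logb 2 v := by
  have hu : 0 < u := lt_of_lt_of_le hr hru
  have hv : 0 < v := lt_of_lt_of_le hr hrv
  have ht : 0 < t := lt_of_lt_of_le hu hut
  have hlog : Real.logb 2 r + Real.logb 2 t = Real.logb 2 u + Real.logb 2 v := by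
    rw [← Real.logb_mul hr.ne' ht.ne', ← Real.logb_mul hu.ne' hv.ne', hci]
  nlinarith [hlog]

lemma ineq_key {r u v t : ℝ} (hr : 0 < r) (hru : r ≤ u) (hrv : r ≤ v) (hut : u ≤ t) :
    (r - u * v / t) / Real.log 2
      ≤ r * Real.logb 2 r + r * Real.logb 2 t - r * Real.logb 2 u - r * Real.logb 2 v := by
  have hu : 0 < u := lt_of_lt_of_le hr hru
  have hv : 0 < v := lt_of_lt_of_le hr hrv
  have ht : 0 < t := lt_of_lt_of_le hu hut
  have hx : 0 < u * v / (r * t) := by positivity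
  have hlog := Real.log_le_sub_one_of_pos hx
  have hexp : Real.log (u * v / (r * t))
      = Real.log u + Real.log v - Real.log r - Real.log t := by
    rw [Real.log_div (by positivity : (0:ℝ) < u * v).ne'
      (by positivity : (0:ℝ) < r * t).ne', Real.log_mul hu.ne' hv.ne',
      Real.log_mul hr.ne' ht.ne']
    ring
  have h2 : (0:ℝ) < Real.log 2 := Real.log_pos one_lt_two
  have hmain : r - u * v / t ≤ r * (Real.log r + Real.log t - Real.log u - Real.log v) := by
    have h1 : 1 - u * v / (r * t) ≤ Real.log r + Real.log t - Real.log u - Real.log v := by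
      nlinarith [hlog, hexp]
    have h3 : r * (1 - u * v / (r * t)) = r - u * v / t := by
      field_simp
    nlinarith [mul_le_mul_of_nonneg_left h1 hr.le]
  simp only [Real.logb]
  have hrw : r * (Real.log r / Real.log 2) + r * (Real.log t / Real.log 2)
      - r * (Real.log u / Real.log 2) - r * (Real.log v / Real.log 2)
      = (r * (Real.log r + Real.log t - Real.log u - Real.log v)) / Real.log 2 := by
    ring
  rw [hrw]
  exact (div_le_div_iff_of_pos_right h2).mpr hmain

lemma hcond_condIndep (hp : IsPMF p) {f : Ω → α} {g : Ω → β} {h : Ω → γ}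
    (hci : CondIndepFun p f g h) :
    Hcond p f (fun ω => (g ω, h ω)) = Hcond p f h := by
  simp only [Hcond]
  rw [hent_triple f g h, hent_pair13 f g h, hent_pair23 f g h, hent_third f g h]
  have key : ∀ a b c,
      prob p (fun ω => (f ω, g ω, h ω)) (a, b, c)
          * Real.logb 2 (prob p (fun ω => (f ω, g ω, h ω)) (a, b, c))
        + prob p (fun ω => (f ω, g ω, h ω)) (a, b, c) * Real.logb 2 (prob p h c)
        - prob p (fun ω => (f ω, g ω, h ω)) (a, b, c)
          * Real.logb 2 (prob p (fun ω => (f ω, h ω)) (a, c))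
        - prob p (fun ω => (f ω, g ω, h ω)) (a, b, c)
          * Real.logb 2 (prob p (fun ω => (g ω, h ω)) (b, c)) = 0 := by
    intro a b c
    by_cases hr : prob p (fun ω => (f ω, g ω, h ω)) (a, b, c) = 0
    · simp [hr]
    · have hr' : 0 < prob p (fun ω => (f ω, g ω, h ω)) (a, b, c) :=
        lt_of_le_of_ne (prob_nonneg hp.1 _ _) (Ne.symm hr)
      have hru : prob p (fun ω => (f ω, g ω, h ω)) (a, b, c)
          ≤ prob p (fun ω => (f ω, h ω)) (a, c) := by
        rw [prob_m1 f g h a c]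
        exact Finset.single_le_sum
          (f := fun b' => prob p (fun ω => (f ω, g ω, h ω)) (a, b', c))
          (fun b' _ => prob_nonneg hp.1 _ _) (Finset.mem_univ b)
      have hrv : prob p (fun ω => (f ω, g ω, h ω)) (a, b, c)
          ≤ prob p (fun ω => (g ω, h ω)) (b, c) := by
        rw [prob_m2 f g h b c]
        exact Finset.single_le_sum
          (f := fun a' => prob p (fun ω => (f ω, g ω, h ω)) (a', b, c))
          (fun a' _ => prob_nonneg hp.1 _ _) (Finset.mem_univ a)
      have hut : prob p (fun ω => (f ω, h ω)) (a, c) ≤ prob p h c := by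
        rw [prob_snd f h c]
        exact Finset.single_le_sum
          (f := fun a' => prob p (fun ω => (f ω, h ω)) (a', c))
          (fun a' _ => prob_nonneg hp.1 _ _) (Finset.mem_univ a)
      have := logb_key hr' hru hrv hut (hci a b c)
      linarith [this]
  have main : ∑ a, ∑ b, ∑ c,
      (prob p (fun ω => (f ω, g ω, h ω)) (a, b, c)
          * Real.logb 2 (prob p (fun ω => (f ω, g ω, h ω)) (a, b, c))
        + prob p (fun ω => (f ω, g ω, h ω)) (a, b, c) * Real.logb 2 (prob p h c)
        - prob p (fun ω => (f ω, g ω, h ω)) (a, b, c)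
          * Real.logb 2 (prob p (fun ω => (f ω, h ω)) (a, c))
        - prob p (fun ω => (f ω, g ω, h ω)) (a, b, c)
          * Real.logb 2 (prob p (fun ω => (g ω, h ω)) (b, c))) = 0 :=
    Finset.sum_eq_zero fun a _ => Finset.sum_eq_zero fun b _ => Finset.sum_eq_zero fun c _ =>
      key a b c
  simp only [Finset.sum_add_distrib, Finset.sum_sub_distrib] at main
  linarith [main]

lemma icond_nonneg (hp : IsPMF p) (f : Ω → α) (g : Ω → β) (h : Ω → γ) :
    0 ≤ Icond p f g h := by
  simp only [Icond, Hcond]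
  have hsw : Hent p (fun ω => ((f ω, g ω), h ω)) = Hent p (fun ω => (f ω, g ω, h ω)) :=
    hent_of_mutual (fun x => (x.1.1, x.1.2, x.2)) (fun x => ((x.1, x.2.1), x.2.2))
      (fun ω => rfl) (fun ω => rfl)
  rw [hsw, hent_triple f g h, hent_pair13 f g h, hent_pair23 f g h, hent_third f g h]
  have hru : ∀ a b c, prob p (fun ω => (f ω, g ω, h ω)) (a, b, c)
      ≤ prob p (fun ω => (f ω, h ω)) (a, c) := by
    intro a b c
    rw [prob_m1 f g h a c]
    exact Finset.single_le_sum
      (f := fun b' => prob p (fun ω => (f ω, g ω, h ω)) (a, b', c))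
      (fun b' _ => prob_nonneg hp.1 _ _) (Finset.mem_univ b)
  have hrv : ∀ a b c, prob p (fun ω => (f ω, g ω, h ω)) (a, b, c)
      ≤ prob p (fun ω => (g ω, h ω)) (b, c) := by
    intro a b c
    rw [prob_m2 f g h b c]
    exact Finset.single_le_sum
      (f := fun a' => prob p (fun ω => (f ω, g ω, h ω)) (a', b, c))
      (fun a' _ => prob_nonneg hp.1 _ _) (Finset.mem_univ a)
  have hut : ∀ a c, prob p (fun ω => (f ω, h ω)) (a, c) ≤ prob p h c := by
    intro a c
    rw [prob_snd f h c]
    exact Finset.single_le_sum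
      (f := fun a' => prob p (fun ω => (f ω, h ω)) (a', c))
      (fun a' _ => prob_nonneg hp.1 _ _) (Finset.mem_univ a)
  have hvt : ∀ b c, prob p (fun ω => (g ω, h ω)) (b, c) ≤ prob p h c := by
    intro b c
    rw [prob_snd g h c]
    exact Finset.single_le_sum
      (f := fun b' => prob p (fun ω => (g ω, h ω)) (b', c))
      (fun b' _ => prob_nonneg hp.1 _ _) (Finset.mem_univ b)
  -- lower bound each term
  have hstep : ∀ a b c,
      (if 0 < prob p (fun ω => (f ω, g ω, h ω)) (a, b, c) then
          prob p (fun ω => (f ω, g ω, h ω)) (a, b, c)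
            - prob p (fun ω => (f ω, h ω)) (a, c) * prob p (fun ω => (g ω, h ω)) (b, c)
              / prob p h c
        else 0) / Real.log 2
      ≤ prob p (fun ω => (f ω, g ω, h ω)) (a, b, c)
          * Real.logb 2 (prob p (fun ω => (f ω, g ω, h ω)) (a, b, c))
        + prob p (fun ω => (f ω, g ω, h ω)) (a, b, c) * Real.logb 2 (prob p h c)
        - prob p (fun ω => (f ω, g ω, h ω)) (a, b, c)
          * Real.logb 2 (prob p (fun ω => (f ω, h ω)) (a, c))
        - prob p (fun ω => (f ω, g ω, h ω)) (a, b, c)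
          * Real.logb 2 (prob p (fun ω => (g ω, h ω)) (b, c)) := by
    intro a b c
    by_cases hr : 0 < prob p (fun ω => (f ω, g ω, h ω)) (a, b, c)
    · rw [if_pos hr]
      exact ineq_key hr (hru a b c) (hrv a b c) (hut a c)
    · have hr0 : prob p (fun ω => (f ω, g ω, h ω)) (a, b, c) = 0 :=
        le_antisymm (not_lt.1 hr) (prob_nonneg hp.1 _ _)
      rw [if_neg hr, hr0]
      simp
  -- the lower bound sums to at least 0
  have hLB : 0 ≤ ∑ a, ∑ b, ∑ c,
      (if 0 < prob p (fun ω => (f ω, g ω, h ω)) (a, b, c) then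
          prob p (fun ω => (f ω, g ω, h ω)) (a, b, c)
            - prob p (fun ω => (f ω, h ω)) (a, c) * prob p (fun ω => (g ω, h ω)) (b, c)
              / prob p h c
        else 0) := by
    have hsplit : ∀ a b c,
        (if 0 < prob p (fun ω => (f ω, g ω, h ω)) (a, b, c) then
            prob p (fun ω => (f ω, g ω, h ω)) (a, b, c)
              - prob p (fun ω => (f ω, h ω)) (a, c) * prob p (fun ω => (g ω, h ω)) (b, c)
                / prob p h c
          else 0)
        = (if 0 < prob p (fun ω => (f ω, g ω, h ω)) (a, b, c) then
            prob p (fun ω => (f ω, g ω, h ω)) (a, b, c) else 0)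
          - (if 0 < prob p (fun ω => (f ω, g ω, h ω)) (a, b, c) then
            prob p (fun ω => (f ω, h ω)) (a, c) * prob p (fun ω => (g ω, h ω)) (b, c)
              / prob p h c else 0) := by
      intro a b c
      split_ifs <;> simp
    simp only [hsplit, Finset.sum_sub_distrib]
    have hS1 : ∑ a, ∑ b, ∑ c,
        (if 0 < prob p (fun ω => (f ω, g ω, h ω)) (a, b, c) then
          prob p (fun ω => (f ω, g ω, h ω)) (a, b, c) else 0) = 1 := by
      have e1 : ∀ a b c, (if 0 < prob p (fun ω => (f ω, g ω, h ω)) (a, b, c) then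
          prob p (fun ω => (f ω, g ω, h ω)) (a, b, c) else 0)
          = prob p (fun ω => (f ω, g ω, h ω)) (a, b, c) := by
        intro a b c
        split_ifs with hr
        · rfl
        · exact (le_antisymm (not_lt.1 hr) (prob_nonneg hp.1 _ _)).symm
      simp only [e1]
      have htot := prob_sum hp (fun ω => (f ω, g ω, h ω))
      simp only [Fintype.sum_prod_type] at htot
      exact htot
    have hS2 : ∑ a, ∑ b, ∑ c,
        (if 0 < prob p (fun ω => (f ω, g ω, h ω)) (a, b, c) then
          prob p (fun ω => (f ω, h ω)) (a, c) * prob p (fun ω => (g ω, h ω)) (b, c)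
            / prob p h c else 0) ≤ 1 := by
      have step1 : ∀ a b c, (if 0 < prob p (fun ω => (f ω, g ω, h ω)) (a, b, c) then
          prob p (fun ω => (f ω, h ω)) (a, c) * prob p (fun ω => (g ω, h ω)) (b, c)
            / prob p h c else 0)
          ≤ (if 0 < prob p h c then
          prob p (fun ω => (f ω, h ω)) (a, c) * prob p (fun ω => (g ω, h ω)) (b, c)
            / prob p h c else 0) := by
        intro a b c
        by_cases hr : 0 < prob p (fun ω => (f ω, g ω, h ω)) (a, b, c)
        · rw [if_pos hr, if_pos (lt_of_lt_of_le hr ((hru a b c).trans (hut a c)))]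
        · rw [if_neg hr]
          split_ifs with htc
          · have h1 := prob_nonneg hp.1 (fun ω => (f ω, h ω)) (a, c)
            have h2 := prob_nonneg hp.1 (fun ω => (g ω, h ω)) (b, c)
            positivity
          · exact le_refl _
      calc ∑ a, ∑ b, ∑ c,
          (if 0 < prob p (fun ω => (f ω, g ω, h ω)) (a, b, c) then
            prob p (fun ω => (f ω, h ω)) (a, c) * prob p (fun ω => (g ω, h ω)) (b, c)
              / prob p h c else 0)
          ≤ ∑ a, ∑ b, ∑ c, (if 0 < prob p h c then
            prob p (fun ω => (f ω, h ω)) (a, c) * prob p (fun ω => (g ω, h ω)) (b, c)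
              / prob p h c else 0) := by
            refine Finset.sum_le_sum fun a _ => Finset.sum_le_sum fun b _ =>
              Finset.sum_le_sum fun c _ => step1 a b c
        _ = ∑ c, ∑ a, ∑ b, (if 0 < prob p h c then
            prob p (fun ω => (f ω, h ω)) (a, c) * prob p (fun ω => (g ω, h ω)) (b, c)
              / prob p h c else 0) := by
            exact (Finset.sum_congr rfl fun a _ => Finset.sum_comm).trans Finset.sum_comm
        _ = ∑ c, (if 0 < prob p h c then prob p h c else 0) := by
            refine Finset.sum_congr rfl fun c _ => ?_
            by_cases htc : 0 < prob p h c
            · simp only [if_pos htc]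
              have e2 : ∑ a, ∑ b, prob p (fun ω => (f ω, h ω)) (a, c)
                  * prob p (fun ω => (g ω, h ω)) (b, c) / prob p h c
                  = (∑ a, prob p (fun ω => (f ω, h ω)) (a, c))
                    * ((∑ b, prob p (fun ω => (g ω, h ω)) (b, c)) / prob p h c) := by
                rw [Finset.sum_mul]
                refine Finset.sum_congr rfl fun a _ => ?_
                calc ∑ b, prob p (fun ω => (f ω, h ω)) (a, c)
                      * prob p (fun ω => (g ω, h ω)) (b, c) / prob p h c
                    = ∑ b, prob p (fun ω => (f ω, h ω)) (a, c)
                      * (prob p (fun ω => (g ω, h ω)) (b, c) / prob p h c) := by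
                      simp [mul_div_assoc]
                  _ = prob p (fun ω => (f ω, h ω)) (a, c)
                      * ∑ b, prob p (fun ω => (g ω, h ω)) (b, c) / prob p h c :=
                      (Finset.mul_sum _ _ _).symm
                  _ = prob p (fun ω => (f ω, h ω)) (a, c)
                      * ((∑ b, prob p (fun ω => (g ω, h ω)) (b, c)) / prob p h c) := by
                      rw [Finset.sum_div]
              rw [e2, ← prob_snd f h c, ← prob_snd g h c, div_self htc.ne', mul_one]
            · simp only [if_neg htc]
              simp
        _ ≤ ∑ c, prob p h c := by
            refine Finset.sum_le_sum fun c _ => ?_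
            split_ifs
            · exact le_refl _
            · exact prob_nonneg hp.1 h c
        _ = 1 := prob_sum hp h
    linarith [hS1, hS2]
  -- combine
  have hsum_le : ∑ a, ∑ b, ∑ c,
      (if 0 < prob p (fun ω => (f ω, g ω, h ω)) (a, b, c) then
          prob p (fun ω => (f ω, g ω, h ω)) (a, b, c)
            - prob p (fun ω => (f ω, h ω)) (a, c) * prob p (fun ω => (g ω, h ω)) (b, c)
              / prob p h c
        else 0) / Real.log 2
      ≤ ∑ a, ∑ b, ∑ c,
        (prob p (fun ω => (f ω, g ω, h ω)) (a, b, c)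
          * Real.logb 2 (prob p (fun ω => (f ω, g ω, h ω)) (a, b, c))
        + prob p (fun ω => (f ω, g ω, h ω)) (a, b, c) * Real.logb 2 (prob p h c)
        - prob p (fun ω => (f ω, g ω, h ω)) (a, b, c)
          * Real.logb 2 (prob p (fun ω => (f ω, h ω)) (a, c))
        - prob p (fun ω => (f ω, g ω, h ω)) (a, b, c)
          * Real.logb 2 (prob p (fun ω => (g ω, h ω)) (b, c))) := by
    refine Finset.sum_le_sum fun a _ => Finset.sum_le_sum fun b _ =>
      Finset.sum_le_sum fun c _ => hstep a b c
  have h2 : (0:ℝ) < Real.log 2 := Real.log_pos one_lt_two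
  have hLB2 : 0 ≤ ∑ a, ∑ b, ∑ c,
      (if 0 < prob p (fun ω => (f ω, g ω, h ω)) (a, b, c) then
          prob p (fun ω => (f ω, g ω, h ω)) (a, b, c)
            - prob p (fun ω => (f ω, h ω)) (a, c) * prob p (fun ω => (g ω, h ω)) (b, c)
              / prob p h c
        else 0) / Real.log 2 := by
    simp only [← Finset.sum_div]
    exact div_nonneg hLB h2.le
  have hfinal := le_trans hLB2 hsum_le
  simp only [Finset.sum_add_distrib, Finset.sum_sub_distrib] at hfinal
  linarith [hfinal]

lemma hcond_of_mutual {f : Ω → α} {g : Ω → β} {h : Ω → γ} (φ : β → γ) (ψ : γ → β)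
    (h1 : ∀ ω, h ω = φ (g ω)) (h2 : ∀ ω, g ω = ψ (h ω)) : Hcond p f g = Hcond p f h := by
  unfold Hcond
  have e1 : Hent p (fun ω => (f ω, g ω)) = Hent p (fun ω => (f ω, h ω)) :=
    hent_of_mutual (fun x : α × β => (x.1, φ x.2)) (fun x : α × γ => (x.1, ψ x.2))
      (fun ω => by simp only; rw [h1 ω]) (fun ω => by simp only; rw [← h2 ω])
  rw [e1, hent_of_mutual φ ψ h1 h2]

lemma hcond_chain (f : Ω → α) (g : Ω → β) (h : Ω → γ) :
    Hcond p (fun ω => (f ω, g ω)) h = Hcond p g h + Hcond p f (fun ω => (g ω, h ω)) := by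
  simp only [Hcond]
  have e : Hent p (fun ω => ((f ω, g ω), h ω)) = Hent p (fun ω => (f ω, (g ω, h ω))) :=
    hent_of_mutual (fun x : (α × β) × γ => (x.1.1, (x.1.2, x.2)))
      (fun x : α × β × γ => ((x.1, x.2.1), x.2.2)) (fun ω => rfl) (fun ω => rfl)
  rw [e]
  ring

lemma icond_eq (f : Ω → α) (g : Ω → β) (h : Ω → γ) :
    Icond p f g h = Hcond p f h - Hcond p f (fun ω => (g ω, h ω)) := by
  simp only [Icond]
  rw [hcond_chain f g h]
  ring

lemma icond_comm (f : Ω → α) (g : Ω → β) (h : Ω → γ) : Icond p f g h = Icond p g f h := by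
  simp only [Icond]
  have e : Hcond p (fun ω => (f ω, g ω)) h = Hcond p (fun ω => (g ω, f ω)) h := by
    unfold Hcond
    have := hent_of_mutual (p := p) (f := fun ω => ((f ω, g ω), h ω))
      (g := fun ω => ((g ω, f ω), h ω))
      (fun x : (α × β) × γ => ((x.1.2, x.1.1), x.2))
      (fun x : (β × α) × γ => ((x.1.2, x.1.1), x.2)) (fun ω => rfl) (fun ω => rfl)
    rw [this]
  rw [e]
  ring

lemma icond_eq' (f : Ω → α) (g : Ω → β) (h : Ω → γ) :
    Icond p f g h = Hcond p g h - Hcond p g (fun ω => (f ω, h ω)) := by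
  rw [icond_comm f g h, icond_eq g f h]

lemma hcond_cond_pair_le (hp : IsPMF p) (f : Ω → α) (g : Ω → β) (h : Ω → γ) :
    Hcond p f (fun ω => (g ω, h ω)) ≤ Hcond p f h := by
  have h0 := icond_nonneg hp f g h
  rw [icond_eq f g h] at h0
  linarith

lemma hcond_le_comp (hp : IsPMF p) (f : Ω → α) {h : Ω → β} (ρ : β → γ) {h' : Ω → γ}
    (hh : ∀ ω, h' ω = ρ (h ω)) : Hcond p f h ≤ Hcond p f h' := by
  have e : Hcond p f h = Hcond p f (fun ω => (h ω, h' ω)) :=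
    hcond_of_mutual (f := f) (fun b => ((b, ρ b) : β × γ)) (fun x : β × γ => x.1)
      (fun ω => by rw [hh ω]) (fun ω => rfl)
  rw [e]
  exact hcond_cond_pair_le hp f h h'

lemma hcond_pair_determined {f : Ω → α} {g : Ω → β} {h : Ω → γ} (σ : γ → β)
    (hσ : ∀ ω, g ω = σ (h ω)) :
    Hcond p (fun ω => (f ω, g ω)) h = Hcond p f h := by
  unfold Hcond
  have e : Hent p (fun ω => ((f ω, g ω), h ω)) = Hent p (fun ω => (f ω, h ω)) :=
    hent_of_mutual (fun x : (α × β) × γ => (x.1.1, x.2))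
      (fun y : α × γ => ((y.1, σ y.2), y.2)) (fun ω => rfl)
      (fun ω => by simp only; rw [hσ ω])
  rw [e]

lemma hent_pair_of_indep (hp : IsPMF p) {f : Ω → α} {g : Ω → β}
    (hind : ∀ a b, prob p (fun ω => (f ω, g ω)) (a, b) = prob p f a * prob p g b) :
    Hent p (fun ω => (f ω, g ω)) = Hent p f + Hent p g := by
  unfold Hent
  rw [Fintype.sum_prod_type]
  simp only [hind]
  have key : ∀ a b, prob p f a * prob p g b * Real.logb 2 (prob p f a * prob p g b)
      = prob p f a * Real.logb 2 (prob p f a) * prob p g b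
        + prob p f a * (prob p g b * Real.logb 2 (prob p g b)) := by
    intro a b
    by_cases ha : prob p f a = 0
    · simp [ha]
    by_cases hb : prob p g b = 0
    · simp [hb]
    rw [Real.logb_mul ha hb]
    ring
  simp only [key, Finset.sum_add_distrib]
  have e1 : ∑ a, ∑ b, prob p f a * Real.logb 2 (prob p f a) * prob p g b
      = ∑ a, prob p f a * Real.logb 2 (prob p f a) := by
    refine Finset.sum_congr rfl fun a _ => ?_
    rw [← Finset.mul_sum, prob_sum hp g, mul_one]
  have e2 : ∑ a, ∑ b, prob p f a * (prob p g b * Real.logb 2 (prob p g b))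
      = ∑ b, prob p g b * Real.logb 2 (prob p g b) := by
    rw [Finset.sum_comm]
    refine Finset.sum_congr rfl fun b _ => ?_
    rw [← Finset.sum_mul, prob_sum hp f, one_mul]
  rw [e1, e2]
  ring

lemma hent_uniform {f : Ω → α} (hne : (Fintype.card α : ℝ) ≠ 0)
    (hunif : ∀ a, prob p f a = 1 / Fintype.card α) :
    Hent p f = Real.logb 2 (Fintype.card α) := by
  unfold Hent
  simp only [hunif]
  rw [Finset.sum_const, Finset.card_univ, nsmul_eq_mul]
  rw [one_div, Real.logb_inv]
  field_simp

end Lib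

def Vfun {Ω 𝒮 𝒴 𝒵 : Type*} {n : ℕ} (S : Fin n → Ω → 𝒮) (Y : Fin n → Ω → 𝒴)
    (Z : Fin n → Ω → 𝒵) (k : ℕ) (ω : Ω) :
    ({j : Fin n // (j : ℕ) < k} → 𝒴 × 𝒵) × (Fin n → 𝒮) :=
  (fun j => (Y j.1 ω, Z j.1 ω), fun j => S j ω)

/-- Converse bound for the state-dependent semideterministic relay-without-delay
channel (Theorem 3, first bound): with `Z_i = z(X_i, S_i)`, `X_{r,i}` a function of
`Z^i`, `X_i` a function of `(M, S^n)`, `M` uniform and independent of the i.i.d.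
state sequence, memoryless channel, and Fano's bound, we have with
`U_i = (Z^{i-1}, S^{i-1})`:
`nR ≤ ∑ H(Z_i | U_i, S_i) + ∑ I(X_i; Y_i | U_i, Z_i, S_i) + n·ε_n`. -/
theorem relay_without_delay_converse_one
    {Ω 𝕄 𝒮 𝒳 𝒳r 𝒵 𝒴 : Type*} [Fintype Ω] [Fintype 𝕄] [Fintype 𝒮]
    [Fintype 𝒳] [Fintype 𝒳r] [Fintype 𝒵] [Fintype 𝒴]
    (p : Ω → ℝ) (hp : IsPMF p) (n : ℕ) (hn : 0 < n) (R eps : ℝ)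
    (M : Ω → 𝕄) (S : Fin n → Ω → 𝒮) (X : Fin n → Ω → 𝒳)
    (Xr : Fin n → Ω → 𝒳r) (Z : Fin n → Ω → 𝒵) (Y : Fin n → Ω → 𝒴)
    (hcard : (Fintype.card 𝕄 : ℝ) = 2 ^ ((n : ℝ) * R))
    (hMuniform : ∀ m, prob p M m = 1 / Fintype.card 𝕄)
    (hMindepS : ∀ m sv, prob p (fun ω => (M ω, fun i => S i ω)) (m, sv)
        = prob p M m * prob p (fun ω i => S i ω) sv)
    (hiid : ∃ q : 𝒮 → ℝ, (∀ s, 0 ≤ q s) ∧ (∑ s, q s = 1) ∧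
        ∀ sv : Fin n → 𝒮, prob p (fun ω i => S i ω) sv = ∏ i, q (sv i))
    (hZ : ∃ z : 𝒳 → 𝒮 → 𝒵, ∀ (i : Fin n) ω, Z i ω = z (X i ω) (S i ω))
    (hX : ∀ i : Fin n, ∃ f : 𝕄 → (Fin n → 𝒮) → 𝒳, ∀ ω, X i ω = f (M ω) (fun j => S j ω))
    (hXr : ∀ i : Fin n, ∃ f : ({j : Fin n // j ≤ i} → 𝒵) → 𝒳r,
        ∀ ω, Xr i ω = f (fun j => Z j.1 ω))
    (hmem : ∀ i : Fin n, CondIndepFun p (Y i)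
        (fun ω => (M ω, fun j => S j ω, fun j : {j : Fin n // j < i} => Y j.1 ω))
        (fun ω => (X i ω, Xr i ω, S i ω)))
    (hFano : Hcond p M (fun ω => (fun i => Y i ω, fun i => S i ω)) ≤ n * eps) :
    (n : ℝ) * R ≤
      (∑ i : Fin n, Hcond p (Z i)
        (fun ω => ((fun j : {j : Fin n // j < i} => Z j.1 ω,
                    fun j : {j : Fin n // j < i} => S j.1 ω), S i ω)))
      + (∑ i : Fin n, Icond p (X i) (Y i)
        (fun ω => ((fun j : {j : Fin n // j < i} => Z j.1 ω,
                    fun j : {j : Fin n // j < i} => S j.1 ω), Z i ω, S i ω)))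
      + n * eps := by
  classical
  obtain ⟨z, hz⟩ := hZ
  choose fX hfX using hX
  choose fR hfR using hXr
  -- entropy of the uniform message
  have hcardpos : (0 : ℝ) < Fintype.card 𝕄 := by
    rw [hcard]; exact Real.rpow_pos_of_pos (by norm_num) _
  have HM : Hent p M = (n : ℝ) * R := by
    rw [hent_uniform hcardpos.ne' hMuniform, hcard,
      Real.logb_rpow (by norm_num) (by norm_num)]
  -- the conditional entropy sequence
  set gH : ℕ → ℝ := fun k => Hcond p M (Vfun S Y Z k) with hgH
  -- initial value
  have g0 : gH 0 = (n : ℝ) * R := by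
    have e1 : Hcond p M (Vfun S Y Z 0) = Hcond p M (fun ω => (fun i => S i ω : Fin n → 𝒮)) :=
      hcond_of_mutual (f := M) (fun x => x.2)
        (fun s => ((fun j => (Nat.not_lt_zero _ j.2).elim, s) :
          ({j : Fin n // (j : ℕ) < 0} → 𝒴 × 𝒵) × (Fin n → 𝒮)))
        (fun ω => rfl)
        (fun ω => by
          unfold Vfun
          exact congrArg₂ Prod.mk (funext fun j => (Nat.not_lt_zero _ j.2).elim) rfl)
    have e2 : Hcond p M (fun ω => (fun i => S i ω : Fin n → 𝒮)) = Hent p M := by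
      unfold Hcond
      rw [hent_pair_of_indep hp hMindepS]
      ring
    rw [hgH]
    simp only
    rw [e1, e2, HM]
  -- Fano bound at the end
  have gn : gH n ≤ (n : ℝ) * eps := by
    refine le_trans ?_ hFano
    exact hcond_le_comp hp M
      (fun x : ({j : Fin n // (j : ℕ) < n} → 𝒴 × 𝒵) × (Fin n → 𝒮) =>
        ((fun i => (x.1 ⟨i, i.isLt⟩).1, x.2) : (Fin n → 𝒴) × (Fin n → 𝒮)))
      (fun ω => rfl)
  -- per-step bound
  have step : ∀ i : Fin n, gH i - gH (i + 1) ≤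
      Hcond p (Z i)
        (fun ω => ((fun j : {j : Fin n // j < i} => Z j.1 ω,
                    fun j : {j : Fin n // j < i} => S j.1 ω), S i ω))
      + Icond p (X i) (Y i)
        (fun ω => ((fun j : {j : Fin n // j < i} => Z j.1 ω,
                    fun j : {j : Fin n // j < i} => S j.1 ω), Z i ω, S i ω)) := by
    intro i
    -- (1) the telescoping step equals a conditional mutual information
    have eV : Hcond p M (fun ω => ((Y i ω, Z i ω), Vfun S Y Z (i : ℕ) ω))
        = gH ((i : ℕ) + 1) := by
      refine hcond_of_mutual (f := M)
        (fun x : (𝒴 × 𝒵) × (({j : Fin n // (j : ℕ) < (i : ℕ)} → 𝒴 × 𝒵) × (Fin n → 𝒮)) =>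
          ((fun j : {j : Fin n // (j : ℕ) < (i : ℕ) + 1} =>
            if h : (j.1 : ℕ) < (i : ℕ) then x.2.1 ⟨j.1, h⟩ else x.1, x.2.2) :
            ({j : Fin n // (j : ℕ) < (i : ℕ) + 1} → 𝒴 × 𝒵) × (Fin n → 𝒮)))
        (fun y : ({j : Fin n // (j : ℕ) < (i : ℕ) + 1} → 𝒴 × 𝒵) × (Fin n → 𝒮) =>
          (y.1 ⟨i, Nat.lt_succ_self _⟩,
            (fun j : {j : Fin n // (j : ℕ) < (i : ℕ)} => y.1 ⟨j.1, Nat.lt_succ_of_lt j.2⟩,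
              y.2)))
        (fun ω => ?_) (fun ω => rfl)
      unfold Vfun
      refine congrArg₂ Prod.mk (funext fun j => ?_) rfl
      simp only
      split_ifs with h
      · rfl
      · have hj : j.1 = i := Fin.ext (by omega)
        rw [hj]
    have e1 : gH (i : ℕ) - gH ((i : ℕ) + 1)
        = Icond p M (fun ω => (Y i ω, Z i ω)) (Vfun S Y Z (i : ℕ)) := by
      rw [icond_eq M (fun ω => (Y i ω, Z i ω)) (Vfun S Y Z (i : ℕ)), eV, hgH]
    -- (2) rewrite as difference of conditional entropies of the pair
    have e2 : Icond p M (fun ω => (Y i ω, Z i ω)) (Vfun S Y Z (i : ℕ))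
        = Hcond p (fun ω => (Y i ω, Z i ω)) (Vfun S Y Z (i : ℕ))
          - Hcond p (fun ω => (Y i ω, Z i ω)) (fun ω => (M ω, Vfun S Y Z (i : ℕ) ω)) :=
      icond_eq' M (fun ω => (Y i ω, Z i ω)) (Vfun S Y Z (i : ℕ))
    -- (3) coarsen the conditioning to (U_i, S_i)
    have e3 : Hcond p (fun ω => (Y i ω, Z i ω)) (Vfun S Y Z (i : ℕ))
        ≤ Hcond p (fun ω => (Y i ω, Z i ω))
          (fun ω => ((fun j : {j : Fin n // j < i} => Z j.1 ω,
                      fun j : {j : Fin n // j < i} => S j.1 ω), S i ω)) := by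
      refine hcond_le_comp hp _
        (fun x : ({j : Fin n // (j : ℕ) < (i : ℕ)} → 𝒴 × 𝒵) × (Fin n → 𝒮) =>
          (((fun j : {j : Fin n // j < i} => (x.1 ⟨j.1, j.2⟩).2,
             fun j : {j : Fin n // j < i} => x.2 j.1),
            x.2 i) :
            (({j : Fin n // j < i} → 𝒵) × ({j : Fin n // j < i} → 𝒮)) × 𝒮))
        (fun ω => rfl)
    -- (4) refine the conditioning to the full past
    have e4 : Hcond p (fun ω => (Y i ω, Z i ω))
        (fun ω => ((M ω, fun j => S j ω, fun j : {j : Fin n // j < i} => Y j.1 ω),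
                   (X i ω, Xr i ω, S i ω)))
        ≤ Hcond p (fun ω => (Y i ω, Z i ω)) (fun ω => (M ω, Vfun S Y Z (i : ℕ) ω)) := by
      refine hcond_le_comp hp _
        (fun x : (𝕄 × (Fin n → 𝒮) × ({j : Fin n // j < i} → 𝒴)) × (𝒳 × 𝒳r × 𝒮) =>
          ((x.1.1,
            (fun j : {j : Fin n // (j : ℕ) < (i : ℕ)} =>
              ((x.1.2.2 ⟨j.1, j.2⟩ : 𝒴), z (fX j.1 x.1.1 x.1.2.1) (x.1.2.1 j.1)),
             x.1.2.1)) :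
            𝕄 × (({j : Fin n // (j : ℕ) < (i : ℕ)} → 𝒴 × 𝒵) × (Fin n → 𝒮))))
        (fun ω => ?_)
      unfold Vfun
      refine congrArg₂ Prod.mk rfl (congrArg₂ Prod.mk (funext fun j => ?_) rfl)
      simp only
      rw [hz j.1 ω, hfX j.1 ω]
    -- (5) drop the determined component Z_i
    have e5 : Hcond p (fun ω => (Y i ω, Z i ω))
        (fun ω => ((M ω, fun j => S j ω, fun j : {j : Fin n // j < i} => Y j.1 ω),
                   (X i ω, Xr i ω, S i ω)))
        = Hcond p (Y i)
        (fun ω => ((M ω, fun j => S j ω, fun j : {j : Fin n // j < i} => Y j.1 ω),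
                   (X i ω, Xr i ω, S i ω))) := by
      refine hcond_pair_determined
        (fun x : (𝕄 × (Fin n → 𝒮) × ({j : Fin n // j < i} → 𝒴)) × (𝒳 × 𝒳r × 𝒮) =>
          z x.2.1 x.2.2.2)
        (fun ω => ?_)
      exact hz i ω
    -- (6) memorylessness
    have e6 : Hcond p (Y i)
        (fun ω => ((M ω, fun j => S j ω, fun j : {j : Fin n // j < i} => Y j.1 ω),
                   (X i ω, Xr i ω, S i ω)))
        = Hcond p (Y i) (fun ω => (X i ω, Xr i ω, S i ω)) :=
      hcond_condIndep hp (hmem i)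
    -- (7) the channel inputs are functions of (X_i, U_i, Z_i, S_i)
    have e7 : Hcond p (Y i)
        (fun ω => (X i ω,
          ((fun j : {j : Fin n // j < i} => Z j.1 ω,
            fun j : {j : Fin n // j < i} => S j.1 ω), Z i ω, S i ω)))
        ≤ Hcond p (Y i) (fun ω => (X i ω, Xr i ω, S i ω)) := by
      refine hcond_le_comp hp _
        (fun x : 𝒳 × ((({j : Fin n // j < i} → 𝒵) × ({j : Fin n // j < i} → 𝒮)) × 𝒵 × 𝒮) =>
          ((x.1,
            fR i (fun j : {j : Fin n // j ≤ i} =>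
              if h : (j.1 : ℕ) < (i : ℕ) then x.2.1.1 ⟨j.1, h⟩ else x.2.2.1),
            x.2.2.2) : 𝒳 × 𝒳r × 𝒮))
        (fun ω => ?_)
      refine congrArg₂ Prod.mk rfl (congrArg₂ Prod.mk ?_ rfl)
      simp only
      rw [hfR i ω]
      congr 1
      funext j
      split_ifs with h
      · rfl
      · have hj : j.1 = i := Fin.ext (by
          have := j.2
          omega)
        rw [hj]
    -- (8) chain rule on the pair
    have e8 : Hcond p (fun ω => (Y i ω, Z i ω))
        (fun ω => ((fun j : {j : Fin n // j < i} => Z j.1 ω,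
                    fun j : {j : Fin n // j < i} => S j.1 ω), S i ω))
        = Hcond p (Z i)
          (fun ω => ((fun j : {j : Fin n // j < i} => Z j.1 ω,
                      fun j : {j : Fin n // j < i} => S j.1 ω), S i ω))
        + Hcond p (Y i)
          (fun ω => (Z i ω,
            ((fun j : {j : Fin n // j < i} => Z j.1 ω,
              fun j : {j : Fin n // j < i} => S j.1 ω), S i ω))) :=
      hcond_chain (Y i) (Z i) _
    -- (9) reshuffle
    have e9 : Hcond p (Y i)
        (fun ω => (Z i ω,
          ((fun j : {j : Fin n // j < i} => Z j.1 ω,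
            fun j : {j : Fin n // j < i} => S j.1 ω), S i ω)))
        = Hcond p (Y i)
        (fun ω => ((fun j : {j : Fin n // j < i} => Z j.1 ω,
                    fun j : {j : Fin n // j < i} => S j.1 ω), Z i ω, S i ω)) :=
      hcond_of_mutual (f := Y i)
        (fun x : 𝒵 × ((({j : Fin n // j < i} → 𝒵) × ({j : Fin n // j < i} → 𝒮)) × 𝒮) =>
          ((x.2.1, x.1, x.2.2) :
            (({j : Fin n // j < i} → 𝒵) × ({j : Fin n // j < i} → 𝒮)) × 𝒵 × 𝒮))
        (fun y => (y.2.1, (y.1, y.2.2)))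
        (fun ω => rfl) (fun ω => rfl)
    -- (10) conditional mutual information identity
    have e10 : Icond p (X i) (Y i)
        (fun ω => ((fun j : {j : Fin n // j < i} => Z j.1 ω,
                    fun j : {j : Fin n // j < i} => S j.1 ω), Z i ω, S i ω))
        = Hcond p (Y i)
          (fun ω => ((fun j : {j : Fin n // j < i} => Z j.1 ω,
                      fun j : {j : Fin n // j < i} => S j.1 ω), Z i ω, S i ω))
          - Hcond p (Y i)
          (fun ω => (X i ω,
            ((fun j : {j : Fin n // j < i} => Z j.1 ω,
              fun j : {j : Fin n // j < i} => S j.1 ω), Z i ω, S i ω))) :=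
      icond_eq' (X i) (Y i) _
    linarith [e1, e2, e3, e4, e5, e6, e7, e8, e9, e10]
  -- telescoping sum
  have tele : ∑ i : Fin n, (gH i - gH (i + 1)) = gH 0 - gH n := by
    rw [Fin.sum_univ_eq_sum_range (fun k => gH k - gH (k + 1)) n]
    exact Finset.sum_range_sub' gH n
  have sum_le := Finset.sum_le_sum (fun i (_ : i ∈ Finset.univ) => step i)
  rw [tele] at sum_le
  rw [Finset.sum_add_distrib] at sum_le
  rw [g0] at sum_le
  linarith [sum_le, gn]

end
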